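/- arXiv:2406.02170 — 4 statements merged into one kernel-verified Lean document; each statement's English description precedes it below -/
import Mathlib

section
/- Fix Θ_t ∈ ℂ^{M×M} and set H_t = H̄_eq(Θ_t), R_t = (1/σ²)·I_{N_R} − (σ²·I_{N_R} + H_t H_tᴴ)⁻¹, F_t = R_t^{1/2} F (the PSD square root of R_t times F), Z_t = (1/σ²)·H_tᴴ − H̄ᴴ R_t, and define J(Θ) = 2·Re tr(Z_t F Θ Ḡᴴ) − ‖F_t Θ Ḡᴴ‖_F². Then there exists a real constant A_t, independent of Θ, such that for all Θ ∈ ℂ^{M×M}: C(Θ_t) + (2/σ²)·Re tr(H_t (H̄_eq(Θ) − H_t)ᴴ) − tr(R_tᴴ (H̄_eq(Θ) H̄_eq(Θ)ᴴ − H_t H_tᴴ)) = A_t + J(Θ). -/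
open Matrix
open scoped ComplexOrder

noncomputable def Matrix.PosSemidef.sqrt {n 𝕜 : Type*} [Fintype n] [RCLike 𝕜] [DecidableEq n]
    {A : Matrix n n 𝕜} (hA : A.PosSemidef) : Matrix n n 𝕜 :=
  hA.isHermitian.eigenvectorUnitary.1 * diagonal ((↑) ∘ (√·) ∘ hA.isHermitian.eigenvalues) *
  (star hA.isHermitian.eigenvectorUnitary : Matrix n n 𝕜)

lemma Matrix.PosSemidef.sqrt_conjTranspose' {n : ℕ} {A : Matrix (Fin n) (Fin n) ℂ}
    (hA : A.PosSemidef) : hA.sqrtᴴ = hA.sqrt := by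
  simp only [Matrix.PosSemidef.sqrt, Matrix.conjTranspose_mul, Matrix.diagonal_conjTranspose,
    Matrix.mul_assoc]
  congr 2
  · ext i
    simp
  · simp

lemma Matrix.PosSemidef.sqrt_mul_self' {n : ℕ} {A : Matrix (Fin n) (Fin n) ℂ}
    (hA : A.PosSemidef) : hA.sqrt * hA.sqrt = A := by
  have hU : (star hA.isHermitian.eigenvectorUnitary : Matrix (Fin n) (Fin n) ℂ) *
      hA.isHermitian.eigenvectorUnitary.1 = 1 := Unitary.coe_star_mul_self _
  conv_rhs => rw [hA.isHermitian.spectral_theorem]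
  simp only [Matrix.PosSemidef.sqrt, Matrix.mul_assoc]
  rw [← Matrix.mul_assoc (star _ : Matrix _ _ ℂ), hU, Matrix.one_mul, ← Matrix.mul_assoc (diagonal _),
    Matrix.diagonal_mul_diagonal]
  simp only [Unitary.conjStarAlgAut_apply, Matrix.mul_assoc]
  congr 3
  ext i
  simp only [Function.comp_apply]
  have h := Real.mul_self_sqrt (hA.eigenvalues_nonneg i)
  exact_mod_cast congrArg (fun x : ℝ => (x : ℂ)) h


lemma re_trace_flip {m n : ℕ} (A B : Matrix (Fin m) (Fin n) ℂ) :
    (Matrix.trace (A * Bᴴ)).re = (Matrix.trace (Aᴴ * B)).re := by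
  have h : A * Bᴴ = (B * Aᴴ)ᴴ := by simp [Matrix.conjTranspose_mul]
  rw [h, Matrix.trace_conjTranspose, Matrix.trace_mul_comm]
  simp

lemma re_trace_R_flip {m n : ℕ} (R : Matrix (Fin m) (Fin m) ℂ) (hR : Rᴴ = R)
    (A B : Matrix (Fin m) (Fin n) ℂ) :
    (Matrix.trace (R * (A * Bᴴ))).re = (Matrix.trace (Aᴴ * (R * B))).re := by
  have h : R * (A * Bᴴ) = (B * (Aᴴ * R))ᴴ := by
    simp [Matrix.conjTranspose_mul, hR, Matrix.mul_assoc]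
  rw [h, Matrix.trace_conjTranspose, Matrix.trace_mul_comm]
  simp [Matrix.mul_assoc]

lemma trace_cyc {m n : ℕ} (R : Matrix (Fin m) (Fin m) ℂ)
    (A B : Matrix (Fin n) (Fin m) ℂ) :
    Matrix.trace (R * (Aᴴ * B)) = Matrix.trace (Aᴴ * (B * R)) := by
  rw [Matrix.trace_mul_comm, Matrix.mul_assoc]

lemma aux_key {NR NT : ℕ} (Hb Ht X Xt : Matrix (Fin NR) (Fin NT) ℂ)
    (Rt : Matrix (Fin NR) (Fin NR) ℂ) (hR : Rtᴴ = Rt) (σ2 : ℝ) (hσ : σ2 ≠ 0) :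
    (2 / σ2) * (Matrix.trace (Ht * ((Hb + X) - (Hb + Xt))ᴴ)).re
      - (Matrix.trace (Rtᴴ * ((Hb + X) * (Hb + X)ᴴ - (Hb + Xt) * (Hb + Xt)ᴴ))).re
    = (- (2 / σ2) * (Matrix.trace (Htᴴ * Xt)).re
        + 2 * (Matrix.trace (Hbᴴ * (Rt * Xt))).re
        + (Matrix.trace (Xtᴴ * (Rt * Xt))).re)
      + 2 * (Matrix.trace ((σ2⁻¹ • Htᴴ - Hbᴴ * Rt) * X)).re
      - (Matrix.trace (Xᴴ * (Rt * X))).re := by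
  rw [hR]
  have e1 : Matrix.trace (Ht * ((Hb + X) - (Hb + Xt))ᴴ)
      = Matrix.trace (Ht * Xᴴ) - Matrix.trace (Ht * Xtᴴ) := by
    rw [add_sub_add_left_eq_sub, Matrix.conjTranspose_sub, Matrix.mul_sub,
      Matrix.trace_sub]
  have e2 : Matrix.trace (Rt * ((Hb + X) * (Hb + X)ᴴ - (Hb + Xt) * (Hb + Xt)ᴴ))
      = Matrix.trace (Rt * (Hb * Xᴴ)) + Matrix.trace (Rt * (X * Hbᴴ))
        + Matrix.trace (Rt * (X * Xᴴ))
        - Matrix.trace (Rt * (Hb * Xtᴴ)) - Matrix.trace (Rt * (Xt * Hbᴴ))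
        - Matrix.trace (Rt * (Xt * Xtᴴ)) := by
    simp only [Matrix.conjTranspose_add, Matrix.mul_add, Matrix.add_mul,
      Matrix.mul_sub, Matrix.trace_sub, Matrix.trace_add, Matrix.mul_assoc]
    ring
  have e3 : Matrix.trace ((σ2⁻¹ • Htᴴ - Hbᴴ * Rt) * X)
      = σ2⁻¹ • Matrix.trace (Htᴴ * X) - Matrix.trace (Hbᴴ * (Rt * X)) := by
    simp only [Matrix.sub_mul, Matrix.smul_mul, Matrix.trace_sub, Matrix.trace_smul,
      Matrix.mul_assoc]
  have cyc1 : Matrix.trace (Rt * (X * Hbᴴ)) = Matrix.trace (Hbᴴ * (Rt * X)) := by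
    rw [Matrix.trace_mul_comm, Matrix.mul_assoc, Matrix.trace_mul_comm, Matrix.mul_assoc]
  have cyc1t : Matrix.trace (Rt * (Xt * Hbᴴ)) = Matrix.trace (Hbᴴ * (Rt * Xt)) := by
    rw [Matrix.trace_mul_comm, Matrix.mul_assoc, Matrix.trace_mul_comm, Matrix.mul_assoc]
  have cyc2 : Matrix.trace (Rt * (X * Xᴴ)) = Matrix.trace (Xᴴ * (Rt * X)) := by
    rw [Matrix.trace_mul_comm, Matrix.mul_assoc, Matrix.trace_mul_comm, Matrix.mul_assoc]
  have cyc2t : Matrix.trace (Rt * (Xt * Xtᴴ)) = Matrix.trace (Xtᴴ * (Rt * Xt)) := by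
    rw [Matrix.trace_mul_comm, Matrix.mul_assoc, Matrix.trace_mul_comm, Matrix.mul_assoc]
  rw [e1, e2, e3, cyc1, cyc1t, cyc2, cyc2t]
  simp only [Complex.sub_re, Complex.add_re, Complex.smul_re]
  rw [re_trace_flip Ht X, re_trace_flip Ht Xt,
    re_trace_R_flip Rt hR Hb X, re_trace_R_flip Rt hR Hb Xt]
  field_simp
  rw [smul_eq_mul]
  field_simp
  ring

/-- The minorizer of the capacity equals, up to a constant `A_t` independent of
`Θ`, the quadratic function `J(Θ) = 2 Re tr(Z_t F Θ Ḡᴴ) − ‖F_t Θ Ḡᴴ‖_F²`. -/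
theorem minorizer_eq_const_add_J {NR NT M : ℕ}
    (Hb : Matrix (Fin NR) (Fin NT) ℂ) (F : Matrix (Fin NR) (Fin M) ℂ)
    (Gb : Matrix (Fin NT) (Fin M) ℂ) (σ2 : ℝ) (hσ : 0 < σ2)
    (Heq : Matrix (Fin M) (Fin M) ℂ → Matrix (Fin NR) (Fin NT) ℂ)
    (hHeq : ∀ Θ, Heq Θ = Hb + F * Θ * Gbᴴ)
    (C : Matrix (Fin M) (Fin M) ℂ → ℝ)
    (hC : ∀ Θ, C Θ = Real.log ((1 + σ2⁻¹ • (Heq Θ * (Heq Θ)ᴴ)).det.re))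
    (Θt : Matrix (Fin M) (Fin M) ℂ)
    (Ht : Matrix (Fin NR) (Fin NT) ℂ) (hHt : Ht = Heq Θt)
    (Rt : Matrix (Fin NR) (Fin NR) ℂ)
    (hRt : Rt = σ2⁻¹ • (1 : Matrix (Fin NR) (Fin NR) ℂ)
        - (σ2 • (1 : Matrix (Fin NR) (Fin NR) ℂ) + Ht * Htᴴ)⁻¹)
    (hRtPSD : Rt.PosSemidef)
    (Ft : Matrix (Fin NR) (Fin M) ℂ) (hFt : Ft = hRtPSD.sqrt * F)
    (Zt : Matrix (Fin NT) (Fin NR) ℂ) (hZt : Zt = σ2⁻¹ • Htᴴ - Hbᴴ * Rt)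
    (J : Matrix (Fin M) (Fin M) ℂ → ℝ)
    (hJ : ∀ Θ, J Θ = 2 * (Matrix.trace (Zt * F * Θ * Gbᴴ)).re
        - (Matrix.trace ((Ft * Θ * Gbᴴ)ᴴ * (Ft * Θ * Gbᴴ))).re) :
    ∃ At : ℝ, ∀ Θ : Matrix (Fin M) (Fin M) ℂ,
      C Θt + (2 / σ2) * (Matrix.trace (Ht * (Heq Θ - Ht)ᴴ)).re
        - (Matrix.trace (Rtᴴ * (Heq Θ * (Heq Θ)ᴴ - Ht * Htᴴ))).re
      = At + J Θ := by
  have hRherm : Rtᴴ = Rt := hRtPSD.isHermitian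
  have hsqh : hRtPSD.sqrtᴴ = hRtPSD.sqrt := hRtPSD.sqrt_conjTranspose'
  have hsq : hRtPSD.sqrt * hRtPSD.sqrt = Rt := hRtPSD.sqrt_mul_self'
  refine ⟨C Θt + (- (2 / σ2) * (Matrix.trace (Htᴴ * (F * Θt * Gbᴴ))).re
      + 2 * (Matrix.trace (Hbᴴ * (Rt * (F * Θt * Gbᴴ)))).re
      + (Matrix.trace ((F * Θt * Gbᴴ)ᴴ * (Rt * (F * Θt * Gbᴴ)))).re), fun Θ => ?_⟩
  have hz : Matrix.trace (Zt * F * Θ * Gbᴴ)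
      = Matrix.trace ((σ2⁻¹ • Htᴴ - Hbᴴ * Rt) * (F * Θ * Gbᴴ)) := by
    rw [hZt]; simp only [Matrix.mul_assoc]
  have hf : Matrix.trace ((Ft * Θ * Gbᴴ)ᴴ * (Ft * Θ * Gbᴴ))
      = Matrix.trace ((F * Θ * Gbᴴ)ᴴ * (Rt * (F * Θ * Gbᴴ))) := by
    rw [hFt]
    have h1 : hRtPSD.sqrt * F * Θ * Gbᴴ = hRtPSD.sqrt * (F * Θ * Gbᴴ) := by
      simp only [Matrix.mul_assoc]
    rw [h1, Matrix.conjTranspose_mul, hsqh, Matrix.mul_assoc,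
      ← Matrix.mul_assoc hRtPSD.sqrt hRtPSD.sqrt, hsq]
  rw [hJ, hz, hf, hHt]
  simp only [hHeq]
  have key := aux_key Hb (Hb + F * Θt * Gbᴴ) (F * Θ * Gbᴴ) (F * Θt * Gbᴴ) Rt hRherm σ2
    (ne_of_gt hσ)
  linarith
end

section
/- (Takagi/Autonne factorization of symmetric unitary matrices) If Θ ∈ ℂ^{M×M} satisfies ΘᴴΘ = I_M and Θ = Θᵀ, then there exists a unitary matrix Q ∈ ℂ^{M×M} (QᴴQ = I_M) such that Θ = Q Qᵀ. -/
open Matrix Module.End Module LinearMap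

theorem joint_diag {M : ℕ} (X Y : Matrix (Fin M) (Fin M) ℝ)
    (hX : X.IsHermitian) (hY : Y.IsHermitian) (hcomm : X * Y = Y * X) :
    ∃ (O : Matrix (Fin M) (Fin M) ℝ) (a b : Fin M → ℝ),
      Oᵀ * O = 1 ∧ O * Oᵀ = 1 ∧ X * O = O * diagonal a ∧ Y * O = O * diagonal b := by
  classical
  set A := Matrix.toEuclideanLin X with hA
  set B := Matrix.toEuclideanLin Y with hB
  have hAs : LinearMap.IsSymmetric A := Matrix.isHermitian_iff_isSymmetric.1 hX
  have hBs : LinearMap.IsSymmetric B := Matrix.isHermitian_iff_isSymmetric.1 hY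
  have key : ∀ (P Q : Matrix (Fin M) (Fin M) ℝ) v,
      Matrix.toEuclideanLin P (Matrix.toEuclideanLin Q v) = Matrix.toEuclideanLin (P * Q) v := by
    intro P Q v
    simp [Matrix.toEuclideanLin_apply, Matrix.mulVec_mulVec]
  have hAB : Commute A B := by
    rw [Commute, SemiconjBy]
    ext v
    rw [Module.End.mul_apply, Module.End.mul_apply, hA, hB, key, key, hcomm]
  set V : (Eigenvalues A × Eigenvalues B) → Submodule ℝ (EuclideanSpace ℝ (Fin M)) :=
    fun p => eigenspace A p.1.val ⊓ eigenspace B p.2.val with hV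
  have horth : OrthogonalFamily ℝ (fun p => V p) (fun p => (V p).subtypeₗᵢ) := by
    refine OrthogonalFamily.of_pairwise fun p q hpq v hv => ?_
    obtain ⟨hv1, hv2⟩ := hv
    obtain (h1 | h2) : p.1 ≠ q.1 ∨ p.2 ≠ q.2 := by
      rwa [Ne, Prod.ext_iff, not_and_or] at hpq
    all_goals intro w ⟨hw1, hw2⟩
    · exact hAs.orthogonalFamily_eigenspaces.pairwise (fun h => h1 (Subtype.ext h)) hv1 w hw1
    · exact hBs.orthogonalFamily_eigenspaces.pairwise (fun h => h2 (Subtype.ext h)) hv2 w hw2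
  have htop : (⨆ p, V p) = ⊤ := by
    rw [eq_top_iff, ← hAs.iSup_iSup_eigenspace_inf_eigenspace_eq_top_of_commute hBs hAB]
    refine iSup_le fun a => iSup_le fun c => ?_
    by_cases ha : HasEigenvalue A a
    · by_cases hc : HasEigenvalue B c
      · exact le_iSup V (⟨a, ha⟩, ⟨c, hc⟩)
      · have : eigenspace B c = ⊥ := not_not.mp (mt hasEigenvalue_iff.mpr hc)
        simp [this]
    · have : eigenspace A a = ⊥ := not_not.mp (mt hasEigenvalue_iff.mpr ha)
      simp [this]
  have hint : DirectSum.IsInternal V := by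
    rw [horth.isInternal_iff]
    rw [htop, Submodule.top_orthogonal_eq_bot]
  have hn : Module.finrank ℝ (EuclideanSpace ℝ (Fin M)) = M := finrank_euclideanSpace_fin
  set b := hint.subordinateOrthonormalBasis hn horth with hb
  set p : Fin M → Eigenvalues A × Eigenvalues B :=
    fun j => hint.subordinateOrthonormalBasisIndex hn j horth with hp
  have hmem : ∀ j, b j ∈ V (p j) := fun j =>
    hint.subordinateOrthonormalBasis_subordinate hn j horth
  set O : Matrix (Fin M) (Fin M) ℝ :=
    (EuclideanSpace.basisFun (Fin M) ℝ).toBasis.toMatrix b.toBasis with hO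
  have hOu : O ∈ Matrix.unitaryGroup (Fin M) ℝ :=
    (EuclideanSpace.basisFun (Fin M) ℝ).toMatrix_orthonormalBasis_mem_unitary b
  have hstar : star O = Oᵀ := by
    ext i j
    simp [Matrix.star_apply]
  have hOapp : ∀ i j, O i j = b j i := fun i j => rfl
  refine ⟨O, fun j => ((p j).1 : ℝ), fun j => ((p j).2 : ℝ), ?_, ?_, ?_, ?_⟩
  · rw [← hstar]; exact Matrix.mem_unitaryGroup_iff'.mp hOu
  · rw [← hstar]; exact Matrix.mem_unitaryGroup_iff.mp hOu
  · have hXj : ∀ j, X *ᵥ ⇑(b j) = ((p j).1 : ℝ) • ⇑(b j) := by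
      intro j
      have h1 : A (b j) = ((p j).1 : ℝ) • (b j) := mem_eigenspace_iff.mp (hmem j).1
      simpa [hA, Matrix.toEuclideanLin_apply] using congr(⇑$(h1))
    ext i j
    rw [Matrix.mul_diagonal]
    have h2 : (X * O) i j = (X *ᵥ ⇑(b j)) i := by
      simp [Matrix.mul_apply, Matrix.mulVec, dotProduct, hOapp]
    rw [h2, hXj, Pi.smul_apply, smul_eq_mul, mul_comm]; rfl
  · have hYj : ∀ j, Y *ᵥ ⇑(b j) = ((p j).2 : ℝ) • ⇑(b j) := by
      intro j
      have h1 : B (b j) = ((p j).2 : ℝ) • (b j) := mem_eigenspace_iff.mp (hmem j).2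
      simpa [hB, Matrix.toEuclideanLin_apply] using congr(⇑$(h1))
    ext i j
    rw [Matrix.mul_diagonal]
    have h2 : (Y * O) i j = (Y *ᵥ ⇑(b j)) i := by
      simp [Matrix.mul_apply, Matrix.mulVec, dotProduct, hOapp]
    rw [h2, hYj, Pi.smul_apply, smul_eq_mul, mul_comm]; rfl

/-- Takagi/Autonne factorization of symmetric unitary matrices:
every symmetric unitary `Θ` factors as `Θ = Q Qᵀ` with `Q` unitary. -/
theorem takagi_symmetric_unitary {M : ℕ} (Θ : Matrix (Fin M) (Fin M) ℂ)
    (hunit : Θᴴ * Θ = 1) (hsym : Θ = Θᵀ) :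
    ∃ Q : Matrix (Fin M) (Fin M) ℂ, Qᴴ * Q = 1 ∧ Θ = Q * Qᵀ := by
  classical
  set X : Matrix (Fin M) (Fin M) ℝ := fun i j => (Θ i j).re with hXdef
  set Y : Matrix (Fin M) (Fin M) ℝ := fun i j => (Θ i j).im with hYdef
  have hsym' : ∀ i j, Θ i j = Θ j i := by
    intro i j
    conv_lhs => rw [hsym]
    rfl
  have hXs : X.IsHermitian := by
    ext i j
    simp only [conjTranspose_apply, hXdef, star_trivial]
    show star ((Θ j i).re) = (Θ i j).re
    rw [star_trivial, hsym' j i]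
  have hYs : Y.IsHermitian := by
    ext i j
    simp only [conjTranspose_apply, hYdef, star_trivial]
    show star ((Θ j i).im) = (Θ i j).im
    rw [star_trivial, hsym' j i]
  have hentry : ∀ i j, ∑ k, (starRingEnd ℂ) (Θ i k) * Θ k j
      = (1 : Matrix (Fin M) (Fin M) ℂ) i j := by
    intro i j
    have h := congrFun (congrFun hunit i) j
    rw [Matrix.mul_apply] at h
    rw [← h]
    refine Finset.sum_congr rfl fun k _ => ?_
    rw [Matrix.conjTranspose_apply, hsym' k i]
    rfl
  have hXX : X * X + Y * Y = 1 := by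
    ext i j
    have h := congrArg Complex.re (hentry i j)
    simp only [Complex.re_sum] at h
    have h2 : ∑ k, (X i k * X k j + Y i k * Y k j)
        = ((1 : Matrix (Fin M) (Fin M) ℂ) i j).re := by
      rw [← h]
      refine Finset.sum_congr rfl fun k _ => ?_
      simp only [hXdef, hYdef, Complex.mul_re, Complex.conj_re, Complex.conj_im]
      ring
    rw [Finset.sum_add_distrib] at h2
    simp only [Matrix.add_apply, Matrix.mul_apply]
    rw [h2]
    simp [Matrix.one_apply, apply_ite Complex.re]
  have hcomm : X * Y = Y * X := by
    ext i j
    have h := congrArg Complex.im (hentry i j)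
    simp only [Complex.im_sum] at h
    have h2 : ∑ k, (X i k * Y k j - Y i k * X k j)
        = ((1 : Matrix (Fin M) (Fin M) ℂ) i j).im := by
      rw [← h]
      refine Finset.sum_congr rfl fun k _ => ?_
      simp only [hXdef, hYdef, Complex.mul_im, Complex.conj_re, Complex.conj_im]
      ring
    have h3 : ((1 : Matrix (Fin M) (Fin M) ℂ) i j).im = 0 := by
      simp [Matrix.one_apply, apply_ite Complex.im]
    rw [h3, Finset.sum_sub_distrib] at h2
    simp only [Matrix.mul_apply]
    linarith [h2]
  obtain ⟨O, a, c, hOtO, hOOt, hXO, hYO⟩ := joint_diag X Y hXs hYs hcomm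
  -- eigenvalue relation : a j ^ 2 + c j ^ 2 = 1
  have hdiag : Matrix.diagonal (fun j => a j * a j + c j * c j) = (1 : Matrix (Fin M) (Fin M) ℝ) := by
    have e1 : (X * X + Y * Y) * O = O * Matrix.diagonal (fun j => a j * a j + c j * c j) := by
      rw [add_mul, mul_assoc, hXO, mul_assoc, hYO, ← mul_assoc, hXO, ← mul_assoc, hYO,
        mul_assoc, mul_assoc, Matrix.diagonal_mul_diagonal, Matrix.diagonal_mul_diagonal,
        ← mul_add, ← Matrix.diagonal_add]
    rw [hXX, one_mul] at e1
    calc Matrix.diagonal (fun j => a j * a j + c j * c j)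
        = (Oᵀ * O) * Matrix.diagonal (fun j => a j * a j + c j * c j) := by rw [hOtO, one_mul]
      _ = Oᵀ * (O * Matrix.diagonal (fun j => a j * a j + c j * c j)) := by rw [mul_assoc]
      _ = Oᵀ * O := by rw [← e1]
      _ = 1 := hOtO
  have hac : ∀ j, a j * a j + c j * c j = 1 := by
    intro j
    have := congrFun (congrFun hdiag j) j
    simpa using this
  -- complex eigenvalues and their square roots
  set lam : Fin M → ℂ := fun j => (a j : ℂ) + (c j : ℂ) * Complex.I with hlam
  have hs : ∀ j, ∃ s : ℂ, s * s = lam j := by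
    intro j
    obtain ⟨z, hz⟩ := IsAlgClosed.exists_pow_nat_eq (lam j) (n := 2) (by norm_num)
    exact ⟨z, by rw [← hz]; ring⟩
  choose s hs2 using hs
  have hnorm : ∀ j, (starRingEnd ℂ) (s j) * s j = 1 := by
    intro j
    have hlamnorm : Complex.normSq (lam j) = 1 := by
      simp [hlam, Complex.normSq_apply]
      have := hac j; nlinarith [hac j]
    have h1 : Complex.normSq (s j) * Complex.normSq (s j) = 1 := by
      rw [← Complex.normSq_mul, hs2 j, hlamnorm]
    have h2 : Complex.normSq (s j) = 1 := by
      rcases mul_self_eq_one_iff.mp h1 with h | h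
      · exact h
      · nlinarith [Complex.normSq_nonneg (s j)]
    rw [← Complex.normSq_eq_conj_mul_self, h2, Complex.ofReal_one]
  -- complexify
  set f : ℝ →+* ℂ := Complex.ofRealHom with hf
  set Oc : Matrix (Fin M) (Fin M) ℂ := O.map f with hOc
  have hOcT : Ocᵀ = Oᵀ.map f := by rw [Matrix.transpose_map]
  have hOcH : Ocᴴ = Oᵀ.map f := by
    ext i j
    simp only [hOc, Matrix.conjTranspose_apply, Matrix.map_apply, Matrix.transpose_apply]
    exact Complex.conj_ofReal _
  have hOcTOc : Ocᵀ * Oc = 1 := by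
    rw [hOcT, hOc, ← Matrix.map_mul, hOtO, Matrix.map_one f f.map_zero f.map_one]
  have hOcOcT : Oc * Ocᵀ = 1 := by
    rw [hOcT, hOc, ← Matrix.map_mul, hOOt, Matrix.map_one f f.map_zero f.map_one]
  -- Θ = Oc * diagonal lam * Ocᵀ
  have hThetaOc : Θ * Oc = Oc * Matrix.diagonal lam := by
    have hXc : X.map f * Oc = Oc * Matrix.diagonal (fun j => (a j : ℂ)) := by
      rw [hOc, ← Matrix.map_mul, hXO, Matrix.map_mul]
      congr 1
      rw [Matrix.diagonal_map f.map_zero]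
      rfl
    have hYc : Y.map f * Oc = Oc * Matrix.diagonal (fun j => (c j : ℂ)) := by
      rw [hOc, ← Matrix.map_mul, hYO, Matrix.map_mul]
      congr 1
      rw [Matrix.diagonal_map f.map_zero]
      rfl
    have hTheta : Θ = X.map f + Complex.I • Y.map f := by
      ext i j
      simp [hOc, Matrix.map_apply, hXdef, hYdef, Matrix.add_apply]
      rw [mul_comm]
      exact (Complex.re_add_im _).symm
    rw [hTheta, add_mul, hXc, Matrix.smul_mul, hYc, ← Matrix.mul_smul, ← Matrix.mul_add]
    congr 1
    ext i j
    by_cases hij : i = j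
    · subst hij
      simp [Matrix.add_apply, Matrix.smul_apply, Matrix.diagonal_apply_eq, hlam, mul_comm]
    · simp [Matrix.add_apply, Matrix.smul_apply, Matrix.diagonal_apply_ne _ hij]
  have hThetaEq : Θ = Oc * Matrix.diagonal lam * Ocᵀ := by
    calc Θ = Θ * (Oc * Ocᵀ) := by rw [hOcOcT, mul_one]
      _ = (Θ * Oc) * Ocᵀ := by rw [mul_assoc]
      _ = Oc * Matrix.diagonal lam * Ocᵀ := by rw [hThetaOc]
  refine ⟨Oc * Matrix.diagonal s, ?_, ?_⟩
  · rw [Matrix.conjTranspose_mul, Matrix.diagonal_conjTranspose, mul_assoc,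
      ← mul_assoc Ocᴴ, hOcH, ← hOcT, hOcTOc, one_mul, Matrix.diagonal_mul_diagonal]
    ext i j
    by_cases hij : i = j
    · subst hij
      simp only [Matrix.diagonal_apply_eq, Matrix.one_apply_eq]
      simpa [Complex.star_def] using hnorm i
    · rw [Matrix.diagonal_apply_ne _ hij, Matrix.one_apply_ne hij]
  · have h5 : Oc * Matrix.diagonal s * (Matrix.diagonal s * Ocᵀ)
        = Oc * Matrix.diagonal lam * Ocᵀ := by
      rw [mul_assoc, ← mul_assoc (Matrix.diagonal s), Matrix.diagonal_mul_diagonal,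
        ← mul_assoc]
      have h4 : (fun i => s i * s i) = lam := funext hs2
      rw [h4]
    rw [Matrix.transpose_mul, Matrix.diagonal_transpose, hThetaEq, ← h5, mul_assoc]
end

section
/- (Ascent property of the MM step) Fix Θ_t ∈ ℂ^{M×M} and set H_t = H̄_eq(Θ_t), R_t = (1/σ²)·I_{N_R} − (σ²·I_{N_R} + H_t H_tᴴ)⁻¹, F_t = R_t^{1/2} F, Z_t = (1/σ²)·H_tᴴ − H̄ᴴ R_t, and J(Θ) = 2·Re tr(Z_t F Θ Ḡᴴ) − ‖F_t Θ Ḡᴴ‖_F². Then for every Θ ∈ ℂ^{M×M}: C(Θ) ≥ C(Θ_t) + (J(Θ) − J(Θ_t)). In particular, if Θ_{t+1} satisfies J(Θ_{t+1}) ≥ J(Θ_t), then C(Θ_{t+1}) ≥ C(Θ_t), so the capacity is nondecreasing along the iterations of the minorize-maximization algorithm. -/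
open Matrix
open scoped ComplexOrder

namespace MMAscentAux

noncomputable def psdSqrt {n : Type*} [Fintype n] [DecidableEq n] {Q : Matrix n n ℂ}
    (hQ : Q.PosSemidef) : Matrix n n ℂ :=
  (hQ.1.eigenvectorUnitary : Matrix n n ℂ) * Matrix.diagonal ((↑) ∘ (√·) ∘ hQ.1.eigenvalues) *
    (star hQ.1.eigenvectorUnitary : Matrix n n ℂ)

lemma psdSqrt_mul_self {n : Type*} [Fintype n] [DecidableEq n] {Q : Matrix n n ℂ}
    (hQ : Q.PosSemidef) : psdSqrt hQ * psdSqrt hQ = Q := by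
  have hU : (star hQ.1.eigenvectorUnitary : Matrix n n ℂ) * hQ.1.eigenvectorUnitary = 1 :=
    Unitary.coe_star_mul_self _
  calc psdSqrt hQ * psdSqrt hQ
      = (hQ.1.eigenvectorUnitary : Matrix n n ℂ) *
          (Matrix.diagonal ((↑) ∘ (√·) ∘ hQ.1.eigenvalues) *
          ((star hQ.1.eigenvectorUnitary : Matrix n n ℂ) * (hQ.1.eigenvectorUnitary : Matrix n n ℂ)) *
          Matrix.diagonal ((↑) ∘ (√·) ∘ hQ.1.eigenvalues)) *
          (star hQ.1.eigenvectorUnitary : Matrix n n ℂ) := by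
        simp only [psdSqrt, Matrix.mul_assoc]
    _ = (hQ.1.eigenvectorUnitary : Matrix n n ℂ) *
          Matrix.diagonal (RCLike.ofReal ∘ hQ.1.eigenvalues) *
          (star hQ.1.eigenvectorUnitary : Matrix n n ℂ) := by
        have hdd : Matrix.diagonal (((↑) : ℝ → ℂ) ∘ (√·) ∘ hQ.1.eigenvalues) *
            Matrix.diagonal (((↑) : ℝ → ℂ) ∘ (√·) ∘ hQ.1.eigenvalues) =
            Matrix.diagonal (RCLike.ofReal ∘ hQ.1.eigenvalues) := by
          rw [Matrix.diagonal_mul_diagonal]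
          congr 1
          funext i
          show Complex.ofReal (√(hQ.1.eigenvalues i)) * Complex.ofReal (√(hQ.1.eigenvalues i)) =
            Complex.ofReal (hQ.1.eigenvalues i)
          rw [← Complex.ofReal_mul, Real.mul_self_sqrt (hQ.eigenvalues_nonneg i)]
        rw [hU, Matrix.mul_one, hdd]
    _ = Q := by
        conv_rhs => rw [hQ.1.spectral_theorem, Unitary.conjStarAlgAut_apply]

lemma psdSqrt_herm {n : Type*} [Fintype n] [DecidableEq n] {Q : Matrix n n ℂ}
    (hQ : Q.PosSemidef) : (psdSqrt hQ)ᴴ = psdSqrt hQ := by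
  have hd : (Matrix.diagonal (((↑) : ℝ → ℂ) ∘ (√·) ∘ hQ.1.eigenvalues))ᴴ =
      Matrix.diagonal (((↑) : ℝ → ℂ) ∘ (√·) ∘ hQ.1.eigenvalues) := by
    rw [Matrix.diagonal_conjTranspose]
    congr 1
    funext i
    simp
  rw [psdSqrt, conjTranspose_mul, conjTranspose_mul, hd,
    Matrix.star_eq_conjTranspose, conjTranspose_conjTranspose, Matrix.mul_assoc]

lemma real_smul_mat {m n : Type*} (r : ℝ) (M : Matrix m n ℂ) : r • M = (r : ℂ) • M := by
  ext i j
  simp [Matrix.smul_apply, Complex.real_smul]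

lemma psd_ofReal_smul {m n : Type*} [Fintype m] [Fintype n] (s : ℝ) (hs : 0 ≤ s)
    (H : Matrix m n ℂ) : (((s : ℂ)) • (Hᴴ * H)).PosSemidef := by
  have h : ((s : ℂ)) • (Hᴴ * H) = (((Real.sqrt s : ℂ)) • H)ᴴ * (((Real.sqrt s : ℂ)) • H) := by
    rw [conjTranspose_smul, Matrix.smul_mul, Matrix.mul_smul, smul_smul]
    rw [Complex.star_def, Complex.conj_ofReal, ← Complex.ofReal_mul, Real.mul_self_sqrt hs]
  rw [h]
  exact posSemidef_conjTranspose_mul_self _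

lemma psd_trace_re_nonneg {n : Type*} [Fintype n] [DecidableEq n]
    {M : Matrix n n ℂ} (hM : M.PosSemidef) : 0 ≤ (Matrix.trace M).re := by
  have h : ∀ i, 0 ≤ (M i i).re := by
    intro i
    have := hM.re_dotProduct_nonneg (Pi.single i 1)
    simpa [dotProduct, Matrix.mulVec, Pi.single_apply] using this
  rw [Matrix.trace]
  simp only [Complex.re_sum]
  exact Finset.sum_nonneg fun i _ => h i

lemma trace_mul_psd_re_nonneg {n : Type*} [Fintype n] [DecidableEq n]
    {P Q : Matrix n n ℂ} (hP : P.PosSemidef) (hQ : Q.PosSemidef) :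
    0 ≤ (Matrix.trace (P * Q)).re := by
  have h1 : P * Q = P * psdSqrt hQ * psdSqrt hQ := by
    rw [Matrix.mul_assoc, psdSqrt_mul_self hQ]
  rw [h1, Matrix.trace_mul_cycle]
  have h2 : psdSqrt hQ * P * psdSqrt hQ = (psdSqrt hQ)ᴴ * P * psdSqrt hQ := by
    rw [psdSqrt_herm hQ]
  rw [h2]
  exact psd_trace_re_nonneg (hP.conjTranspose_mul_mul_same _)


lemma herm_trace_eq_sum {n : ℕ} {X : Matrix (Fin n) (Fin n) ℂ} (hX : X.IsHermitian) :
    Matrix.trace X = ∑ i, (hX.eigenvalues i : ℂ) := by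
  conv_lhs => rw [hX.spectral_theorem]
  rw [Unitary.conjStarAlgAut_apply, Matrix.trace_mul_cycle]
  rw [Unitary.coe_star_mul_self, Matrix.one_mul, Matrix.trace_diagonal]
  rfl

lemma log_det_le_trace {n : ℕ} {X : Matrix (Fin n) (Fin n) ℂ}
    (hX : X.PosSemidef) (hd : 0 < X.det.re) :
    Real.log X.det.re ≤ (Matrix.trace X).re - n := by
  have hH := hX.isHermitian
  have hdet : X.det.re = ∏ i, hH.eigenvalues i := by
    rw [hH.det_eq_prod_eigenvalues]
    rw [← RCLike.ofReal_prod]; exact Complex.ofReal_re _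
  have htr : (Matrix.trace X).re = ∑ i, hH.eigenvalues i := by
    rw [herm_trace_eq_sum hH]
    rw [← Complex.ofReal_sum]; exact Complex.ofReal_re _
  have hpos : ∀ i, 0 < hH.eigenvalues i := by
    intro i
    rcases lt_or_eq_of_le (hX.eigenvalues_nonneg i) with h | h
    · exact h
    · exfalso
      rw [hdet] at hd
      rw [Finset.prod_eq_zero (Finset.mem_univ i) h.symm] at hd
      exact lt_irrefl 0 hd
  rw [hdet, htr, Real.log_prod (fun i _ => (hpos i).ne')]
  have : ∀ i ∈ Finset.univ, Real.log (hH.eigenvalues i) ≤ hH.eigenvalues i - 1 :=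
    fun i _ => Real.log_le_sub_one_of_pos (hpos i)
  calc ∑ i, Real.log (hH.eigenvalues i) ≤ ∑ i, (hH.eigenvalues i - 1) :=
        Finset.sum_le_sum this
    _ = (∑ i, hH.eigenvalues i) - n := by
        rw [Finset.sum_sub_distrib]
        simp


lemma core_logdet {n : ℕ} {B Bt : Matrix (Fin n) (Fin n) ℂ} (hB : B.PosDef) (hBt : Bt.PosDef) :
    Real.log Bt.det.re - Real.log B.det.re ≤ (Matrix.trace (Bt * B⁻¹)).re - n := by
  set S := psdSqrt hBt.posSemidef with hS
  have hBinv : B⁻¹.PosDef := hB.inv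
  have hXpsd : (S * B⁻¹ * S).PosSemidef := by
    have h := hBinv.posSemidef.conjTranspose_mul_mul_same S
    rwa [psdSqrt_herm hBt.posSemidef] at h
  have htr : Matrix.trace (S * B⁻¹ * S) = Matrix.trace (Bt * B⁻¹) := by
    rw [Matrix.trace_mul_cycle, psdSqrt_mul_self hBt.posSemidef]
  have hdet : (S * B⁻¹ * S).det = Bt.det * B.det⁻¹ := by
    rw [Matrix.det_mul, Matrix.det_mul, Matrix.det_nonsing_inv, Ring.inverse_eq_inv]
    rw [mul_comm S.det _, mul_assoc, ← Matrix.det_mul, psdSqrt_mul_self hBt.posSemidef, mul_comm]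
  -- dets are positive reals
  have hBd := hB.det_pos
  have hBtd := hBt.det_pos
  rw [Complex.pos_iff] at hBd hBtd
  have hBre : B.det = (B.det.re : ℂ) := by
    apply Complex.ext <;> simp [hBd.2.symm]
  have hBtre : Bt.det = (Bt.det.re : ℂ) := by
    apply Complex.ext <;> simp [hBtd.2.symm]
  have hdre : (S * B⁻¹ * S).det.re = Bt.det.re * (B.det.re)⁻¹ := by
    rw [hdet, hBre, hBtre, ← Complex.ofReal_inv, ← Complex.ofReal_mul, Complex.ofReal_re]
    simp
  have hpos : 0 < (S * B⁻¹ * S).det.re := by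
    rw [hdre]
    exact mul_pos hBtd.1 (inv_pos.mpr hBd.1)
  have h := log_det_le_trace hXpsd hpos
  rw [hdre, htr] at h
  calc Real.log Bt.det.re - Real.log B.det.re
      = Real.log (Bt.det.re * (B.det.re)⁻¹) := by
        rw [Real.log_mul hBtd.1.ne' (inv_ne_zero hBd.1.ne'), Real.log_inv]; ring
    _ ≤ (Matrix.trace (Bt * B⁻¹)).re - n := h


section
variable {NR NT : ℕ} (s : ℝ)

-- algebraic identity: (1 + s⁻¹ Kᴴ K) Kᴴ = s⁻¹ (Kᴴ (s 1 + K Kᴴ))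
lemma BK_mul (hs : (s:ℂ) ≠ 0) (K : Matrix (Fin NR) (Fin NT) ℂ) :
    (1 + ((s:ℂ))⁻¹ • (Kᴴ * K)) * Kᴴ = ((s:ℂ))⁻¹ • (Kᴴ * ((s:ℂ) • 1 + K * Kᴴ)) := by
  rw [Matrix.add_mul, Matrix.one_mul, Matrix.smul_mul, Matrix.mul_add, Matrix.mul_smul,
    Matrix.mul_one, smul_add, smul_smul, inv_mul_cancel₀ hs, one_smul, Matrix.mul_assoc]

-- Woodbury
lemma woodbury (hs : 0 < s) (K : Matrix (Fin NR) (Fin NT) ℂ) :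
    (1 + ((s:ℂ))⁻¹ • (Kᴴ * K))⁻¹ = 1 - Kᴴ * ((s:ℂ) • 1 + K * Kᴴ)⁻¹ * K := by
  have hs0 : (s:ℂ) ≠ 0 := by exact_mod_cast hs.ne'
  set AK := (s:ℂ) • 1 + K * Kᴴ with hAK
  have hAKpd : AK.PosDef := by
    refine Matrix.PosDef.add_posSemidef ?_ (posSemidef_self_mul_conjTranspose K)
    rw [smul_one_eq_diagonal]
    refine posDef_diagonal_iff.mpr fun i => ?_
    rw [Complex.pos_iff]; simp [hs]
  have hAKu : AK * AK⁻¹ = 1 := Matrix.mul_nonsing_inv _ (isUnit_iff_ne_zero.mpr hAKpd.det_pos.ne')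
  refine Matrix.inv_eq_right_inv ?_
  have h1 : (1 + ((s:ℂ))⁻¹ • (Kᴴ * K)) * (Kᴴ * (AK⁻¹ * K)) = ((s:ℂ))⁻¹ • (Kᴴ * K) := by
    rw [← Matrix.mul_assoc, BK_mul s hs0, Matrix.smul_mul, Matrix.mul_assoc,
      ← Matrix.mul_assoc AK, hAKu, Matrix.one_mul]
  rw [Matrix.mul_sub, Matrix.mul_one, Matrix.mul_assoc, h1]
  abel
end


lemma claimA {NR NT : ℕ} (s : ℝ) (hs : 0 < s) (Ht K : Matrix (Fin NR) (Fin NT) ℂ)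
    (At : Matrix (Fin NR) (Fin NR) ℂ) (hAt : At = (s:ℂ) • 1 + Ht * Htᴴ) :
    1 - (Htᴴ * At⁻¹) * K - Kᴴ * (At⁻¹ * Ht)
        + (Htᴴ * At⁻¹) * ((s:ℂ) • 1 + K * Kᴴ) * (At⁻¹ * Ht)
      = (1 + ((s:ℂ))⁻¹ • (Kᴴ * K))⁻¹
        + (At⁻¹ * Ht - ((s:ℂ) • 1 + K * Kᴴ)⁻¹ * K)ᴴ * ((s:ℂ) • 1 + K * Kᴴ)
          * (At⁻¹ * Ht - ((s:ℂ) • 1 + K * Kᴴ)⁻¹ * K) := by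
  have hs0 : (s:ℂ) ≠ 0 := by exact_mod_cast hs.ne'
  set AK := (s:ℂ) • 1 + K * Kᴴ with hAK
  have hAKpd : AK.PosDef := by
    refine Matrix.PosDef.add_posSemidef ?_ (posSemidef_self_mul_conjTranspose K)
    rw [smul_one_eq_diagonal]
    refine posDef_diagonal_iff.mpr fun i => ?_
    rw [Complex.pos_iff]; simp [hs]
  have hAKu : AK * AK⁻¹ = 1 := Matrix.mul_nonsing_inv _ (isUnit_iff_ne_zero.mpr hAKpd.det_pos.ne')
  have hAKu' : AK⁻¹ * AK = 1 := Matrix.nonsing_inv_mul _ (isUnit_iff_ne_zero.mpr hAKpd.det_pos.ne')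
  have hAKih : (AK⁻¹)ᴴ = AK⁻¹ := hAKpd.inv.isHermitian.eq
  -- conjTranspose of D
  have hD : (At⁻¹ * Ht - AK⁻¹ * K)ᴴ = Htᴴ * At⁻¹ - Kᴴ * AK⁻¹ := by
    have hAtpd : At.PosDef := by
      rw [hAt]
      refine Matrix.PosDef.add_posSemidef ?_ (posSemidef_self_mul_conjTranspose Ht)
      rw [smul_one_eq_diagonal]
      refine posDef_diagonal_iff.mpr fun i => ?_
      rw [Complex.pos_iff]; simp [hs]
    rw [conjTranspose_sub, conjTranspose_mul, conjTranspose_mul, hAKih,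
      hAtpd.inv.isHermitian.eq]
  rw [woodbury s hs K, hD, ← hAK]
  have e1 : Kᴴ * AK⁻¹ * AK = Kᴴ := by rw [Matrix.mul_assoc, hAKu', Matrix.mul_one]
  have e2 : Htᴴ * At⁻¹ * AK * (AK⁻¹ * K) = Htᴴ * At⁻¹ * K := by
    rw [Matrix.mul_assoc (Htᴴ * At⁻¹) AK, ← Matrix.mul_assoc AK, hAKu, Matrix.one_mul]
  have e3 : Kᴴ * (AK⁻¹ * K) = Kᴴ * AK⁻¹ * K := (Matrix.mul_assoc _ _ _).symm
  rw [Matrix.sub_mul, Matrix.sub_mul, e1, Matrix.mul_sub, Matrix.mul_sub, e2, e3]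
  abel


section
variable {NR NT : ℕ}

lemma smul_one_posDef (s : ℝ) (hs : 0 < s) {n : ℕ} :
    (((s:ℂ)) • (1 : Matrix (Fin n) (Fin n) ℂ)).PosDef := by
  rw [smul_one_eq_diagonal]
  refine posDef_diagonal_iff.mpr fun i => ?_
  rw [Complex.pos_iff]; simp [hs]

-- Wt * Utᴴ = s⁻¹ • Htᴴ
lemma WtUt (s : ℝ) (hs : 0 < s) (Ht : Matrix (Fin NR) (Fin NT) ℂ)
    (At : Matrix (Fin NR) (Fin NR) ℂ) (hAt : At = (s:ℂ) • 1 + Ht * Htᴴ) :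
    (1 + ((s:ℂ))⁻¹ • (Htᴴ * Ht)) * (Htᴴ * At⁻¹) = ((s:ℂ))⁻¹ • Htᴴ := by
  have hs0 : (s:ℂ) ≠ 0 := by exact_mod_cast hs.ne'
  have hAtpd : At.PosDef := by
    rw [hAt]
    exact (smul_one_posDef s hs).add_posSemidef (posSemidef_self_mul_conjTranspose Ht)
  have hAtu : At * At⁻¹ = 1 := Matrix.mul_nonsing_inv _ (isUnit_iff_ne_zero.mpr hAtpd.det_pos.ne')
  rw [← Matrix.mul_assoc, BK_mul s hs0, ← hAt, Matrix.smul_mul, Matrix.mul_assoc, hAtu,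
    Matrix.mul_one]

-- Ut * (s⁻¹ • Htᴴ) = Rt
lemma UtsHt (s : ℝ) (hs : 0 < s) (Ht : Matrix (Fin NR) (Fin NT) ℂ)
    (At : Matrix (Fin NR) (Fin NR) ℂ) (hAt : At = (s:ℂ) • 1 + Ht * Htᴴ) :
    (At⁻¹ * Ht) * (((s:ℂ))⁻¹ • Htᴴ) = ((s:ℂ))⁻¹ • (1 : Matrix (Fin NR) (Fin NR) ℂ) - At⁻¹ := by
  have hs0 : (s:ℂ) ≠ 0 := by exact_mod_cast hs.ne'
  have hAtpd : At.PosDef := by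
    rw [hAt]
    exact (smul_one_posDef s hs).add_posSemidef (posSemidef_self_mul_conjTranspose Ht)
  have hAtu' : At⁻¹ * At = 1 := Matrix.nonsing_inv_mul _ (isUnit_iff_ne_zero.mpr hAtpd.det_pos.ne')
  have h1 : Ht * Htᴴ = At - (s:ℂ) • 1 := by rw [hAt]; abel
  rw [Matrix.mul_smul, Matrix.mul_assoc, h1, Matrix.mul_sub, hAtu', Matrix.mul_smul,
    Matrix.mul_one, smul_sub, smul_smul, inv_mul_cancel₀ hs0, one_smul]

end


section
variable {NR NT : ℕ}

lemma Wt_herm (s : ℝ) (Ht : Matrix (Fin NR) (Fin NT) ℂ) :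
    (1 + ((s:ℂ))⁻¹ • (Htᴴ * Ht))ᴴ = 1 + ((s:ℂ))⁻¹ • (Htᴴ * Ht) := by
  rw [conjTranspose_add, conjTranspose_one, conjTranspose_smul, conjTranspose_mul,
    conjTranspose_conjTranspose]
  congr 1
  rw [← Complex.ofReal_inv, Complex.star_def, Complex.conj_ofReal]

lemma UW (s : ℝ) (hs : 0 < s) (Ht : Matrix (Fin NR) (Fin NT) ℂ)
    (At : Matrix (Fin NR) (Fin NR) ℂ) (hAt : At = (s:ℂ) • 1 + Ht * Htᴴ) :
    (At⁻¹ * Ht) * (1 + ((s:ℂ))⁻¹ • (Htᴴ * Ht)) = ((s:ℂ))⁻¹ • Ht := by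
  have hAtpd : At.PosDef := by
    rw [hAt]
    exact (smul_one_posDef s hs).add_posSemidef (posSemidef_self_mul_conjTranspose Ht)
  have h := congrArg conjTranspose (WtUt s hs Ht At hAt)
  rw [conjTranspose_mul, conjTranspose_mul, conjTranspose_conjTranspose,
    hAtpd.inv.isHermitian.eq, Wt_herm, conjTranspose_smul, conjTranspose_conjTranspose] at h
  rw [show star ((s:ℂ))⁻¹ = ((s:ℂ))⁻¹ by
    rw [← Complex.ofReal_inv, Complex.star_def, Complex.conj_ofReal]] at h
  exact h

lemma traceE (s : ℝ) (hs : 0 < s) (Ht K : Matrix (Fin NR) (Fin NT) ℂ)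
    (At : Matrix (Fin NR) (Fin NR) ℂ) (hAt : At = (s:ℂ) • 1 + Ht * Htᴴ)
    (Rt : Matrix (Fin NR) (Fin NR) ℂ)
    (hRt : Rt = ((s:ℂ))⁻¹ • (1 : Matrix (Fin NR) (Fin NR) ℂ) - At⁻¹) :
    Matrix.trace ((1 + ((s:ℂ))⁻¹ • (Htᴴ * Ht)) *
      (1 - (Htᴴ * At⁻¹) * K - Kᴴ * (At⁻¹ * Ht)
        + (Htᴴ * At⁻¹) * ((s:ℂ) • 1 + K * Kᴴ) * (At⁻¹ * Ht)))
    = Matrix.trace (1 + ((s:ℂ))⁻¹ • (Htᴴ * Ht)) + (s:ℂ) * Matrix.trace Rt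
      - ((s:ℂ))⁻¹ * Matrix.trace (Htᴴ * K) - ((s:ℂ))⁻¹ * Matrix.trace (Kᴴ * Ht)
      + Matrix.trace (Kᴴ * Rt * K) := by
  have t1 : Matrix.trace ((1 + ((s:ℂ))⁻¹ • (Htᴴ * Ht)) * ((Htᴴ * At⁻¹) * K))
      = ((s:ℂ))⁻¹ * Matrix.trace (Htᴴ * K) := by
    rw [← Matrix.mul_assoc, WtUt s hs Ht At hAt, Matrix.smul_mul, Matrix.trace_smul,
      smul_eq_mul]
  have t2 : Matrix.trace ((1 + ((s:ℂ))⁻¹ • (Htᴴ * Ht)) * (Kᴴ * (At⁻¹ * Ht)))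
      = ((s:ℂ))⁻¹ * Matrix.trace (Kᴴ * Ht) := by
    rw [← Matrix.mul_assoc, Matrix.trace_mul_cycle, UW s hs Ht At hAt,
      Matrix.smul_mul, Matrix.trace_smul, smul_eq_mul, Matrix.trace_mul_comm]
  have t3 : Matrix.trace ((1 + ((s:ℂ))⁻¹ • (Htᴴ * Ht))
        * ((Htᴴ * At⁻¹) * ((s:ℂ) • 1 + K * Kᴴ) * (At⁻¹ * Ht)))
      = (s:ℂ) * Matrix.trace Rt + Matrix.trace (Kᴴ * Rt * K) := by
    rw [Matrix.mul_assoc (Htᴴ * At⁻¹) ((s:ℂ) • 1 + K * Kᴴ) (At⁻¹ * Ht),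
      ← Matrix.mul_assoc, WtUt s hs Ht At hAt, Matrix.trace_mul_comm,
      Matrix.mul_assoc ((s:ℂ) • 1 + K * Kᴴ) (At⁻¹ * Ht) _, UtsHt s hs Ht At hAt, ← hRt]
    rw [Matrix.add_mul, Matrix.smul_mul, Matrix.one_mul, trace_add, Matrix.trace_smul,
      smul_eq_mul, Matrix.mul_assoc K Kᴴ Rt, Matrix.trace_mul_comm K (Kᴴ * Rt),
      Matrix.mul_assoc Kᴴ Rt K]
  rw [Matrix.mul_add, Matrix.mul_sub, Matrix.mul_sub, Matrix.mul_one]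
  rw [trace_add, trace_sub, trace_sub, t1, t2, t3]
  ring
end


lemma det_switch {NR NT : ℕ} (c : ℂ) (K : Matrix (Fin NR) (Fin NT) ℂ) :
    (1 + c • (K * Kᴴ)).det = (1 + c • (Kᴴ * K)).det := by
  rw [show c • (K * Kᴴ) = K * (c • Kᴴ) from (Matrix.mul_smul K c Kᴴ).symm,
    Matrix.det_one_add_mul_comm, Matrix.smul_mul]

lemma trace_cross_re {NR NT : ℕ} (Ht K : Matrix (Fin NR) (Fin NT) ℂ) :
    (Matrix.trace (Kᴴ * Ht)).re = (Matrix.trace (Htᴴ * K)).re := by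
  have : Kᴴ * Ht = (Htᴴ * K)ᴴ := by rw [conjTranspose_mul, conjTranspose_conjTranspose]
  rw [this, Matrix.trace_conjTranspose]
  exact Complex.conj_re _

lemma key {NR NT : ℕ} (s : ℝ) (hs : 0 < s) (H Ht : Matrix (Fin NR) (Fin NT) ℂ)
    (Rt : Matrix (Fin NR) (Fin NR) ℂ)
    (hRt : Rt = ((s:ℂ))⁻¹ • (1 : Matrix (Fin NR) (Fin NR) ℂ)
      - ((s:ℂ) • (1 : Matrix (Fin NR) (Fin NR) ℂ) + Ht * Htᴴ)⁻¹) :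
    Real.log ((1 + ((s:ℂ))⁻¹ • (H * Hᴴ)).det.re)
      - Real.log ((1 + ((s:ℂ))⁻¹ • (Ht * Htᴴ)).det.re)
    ≥ (2 * s⁻¹ * (Matrix.trace (Htᴴ * H)).re - (Matrix.trace (Hᴴ * Rt * H)).re)
      - (2 * s⁻¹ * (Matrix.trace (Htᴴ * Ht)).re - (Matrix.trace (Htᴴ * Rt * Ht)).re) := by
  have hs0 : (s:ℂ) ≠ 0 := by exact_mod_cast hs.ne'
  set At := (s:ℂ) • (1 : Matrix (Fin NR) (Fin NR) ℂ) + Ht * Htᴴ with hAt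
  have hAtpd : At.PosDef :=
    (smul_one_posDef s hs).add_posSemidef (posSemidef_self_mul_conjTranspose Ht)
  have hsmul : ∀ (K : Matrix (Fin NR) (Fin NT) ℂ), (((s:ℂ))⁻¹ • (Kᴴ * K)).PosSemidef := by
    intro K
    have := psd_ofReal_smul s⁻¹ (by positivity) K
    rwa [Complex.ofReal_inv] at this
  have hWtpd : (1 + ((s:ℂ))⁻¹ • (Htᴴ * Ht)).PosDef := Matrix.PosDef.one.add_posSemidef (hsmul Ht)
  have hBpd : (1 + ((s:ℂ))⁻¹ • (Hᴴ * H)).PosDef := Matrix.PosDef.one.add_posSemidef (hsmul H)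
  have hApd : ((s:ℂ) • (1 : Matrix (Fin NR) (Fin NR) ℂ) + H * Hᴴ).PosDef :=
    (smul_one_posDef s hs).add_posSemidef (posSemidef_self_mul_conjTranspose H)
  -- step 3
  have h3 := core_logdet hBpd hWtpd
  -- step 4 : trace (Wt * B⁻¹).re ≤ trace (Wt * E_H).re
  have h4 : (Matrix.trace ((1 + ((s:ℂ))⁻¹ • (Htᴴ * Ht)) * (1 + ((s:ℂ))⁻¹ • (Hᴴ * H))⁻¹)).re
      ≤ (Matrix.trace ((1 + ((s:ℂ))⁻¹ • (Htᴴ * Ht)) *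
          (1 - (Htᴴ * At⁻¹) * H - Hᴴ * (At⁻¹ * Ht)
            + (Htᴴ * At⁻¹) * ((s:ℂ) • 1 + H * Hᴴ) * (At⁻¹ * Ht)))).re := by
    rw [claimA s hs Ht H At hAt, Matrix.mul_add, trace_add, Complex.add_re]
    have hD : ((At⁻¹ * Ht - ((s:ℂ) • 1 + H * Hᴴ)⁻¹ * H)ᴴ * ((s:ℂ) • 1 + H * Hᴴ)
        * (At⁻¹ * Ht - ((s:ℂ) • 1 + H * Hᴴ)⁻¹ * H)).PosSemidef :=
      hApd.posSemidef.conjTranspose_mul_mul_same _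
    have := trace_mul_psd_re_nonneg hWtpd.posSemidef hD
    linarith
  -- step 5: trace formula at K = H
  have h5 := traceE s hs Ht H At hAt Rt (by rw [hRt])
  -- step 6: E at Ht equals Wt⁻¹
  have h6A := claimA s hs Ht Ht At hAt
  rw [← hAt, sub_self, conjTranspose_zero, Matrix.zero_mul, Matrix.mul_zero, add_zero] at h6A
  have h6 := traceE s hs Ht Ht At hAt Rt (by rw [hRt])
  rw [h6A] at h6
  have hWtinv : (1 + ((s:ℂ))⁻¹ • (Htᴴ * Ht)) * (1 + ((s:ℂ))⁻¹ • (Htᴴ * Ht))⁻¹ = 1 :=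
    Matrix.mul_nonsing_inv _ (isUnit_iff_ne_zero.mpr hWtpd.det_pos.ne')
  rw [hWtinv, Matrix.trace_one] at h6
  -- real parts
  have hre : ∀ z : ℂ, ((s:ℂ)⁻¹ * z).re = s⁻¹ * z.re := by
    intro z
    rw [← Complex.ofReal_inv, Complex.re_ofReal_mul]
  have h5re := congrArg Complex.re h5
  have h6re := congrArg Complex.re h6
  simp only [Complex.add_re, Complex.sub_re, hre,
    show ∀ z : ℂ, ((s:ℂ) * z).re = s * z.re from fun z => Complex.re_ofReal_mul s z,
    trace_cross_re Ht H, trace_cross_re Ht Ht] at h5re h6re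
  rw [det_switch ((s:ℂ))⁻¹ H, det_switch ((s:ℂ))⁻¹ Ht]
  have hcast : ((Fintype.card (Fin NT) : ℂ)).re = (NT : ℝ) := by simp
  rw [hcast] at h6re
  linarith



end MMAscentAux

open MMAscentAux

/-- Ascent property of the MM step: the capacity dominates its minorizer,
`C(Θ) ≥ C(Θ_t) + (J(Θ) − J(Θ_t))`; hence any `Θ_{t+1}` with `J(Θ_{t+1}) ≥ J(Θ_t)`
satisfies `C(Θ_{t+1}) ≥ C(Θ_t)`, so the capacity is nondecreasing along MM iterations. -/
theorem mm_ascent_property {NR NT M : ℕ}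
    (Hb : Matrix (Fin NR) (Fin NT) ℂ) (F : Matrix (Fin NR) (Fin M) ℂ)
    (Gb : Matrix (Fin NT) (Fin M) ℂ) (σ2 : ℝ) (hσ : 0 < σ2)
    (Heq : Matrix (Fin M) (Fin M) ℂ → Matrix (Fin NR) (Fin NT) ℂ)
    (hHeq : ∀ Θ, Heq Θ = Hb + F * Θ * Gbᴴ)
    (C : Matrix (Fin M) (Fin M) ℂ → ℝ)
    (hC : ∀ Θ, C Θ = Real.log ((1 + σ2⁻¹ • (Heq Θ * (Heq Θ)ᴴ)).det.re))
    (Θt : Matrix (Fin M) (Fin M) ℂ)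
    (Ht : Matrix (Fin NR) (Fin NT) ℂ) (hHt : Ht = Heq Θt)
    (Rt : Matrix (Fin NR) (Fin NR) ℂ)
    (hRt : Rt = σ2⁻¹ • (1 : Matrix (Fin NR) (Fin NR) ℂ)
        - (σ2 • (1 : Matrix (Fin NR) (Fin NR) ℂ) + Ht * Htᴴ)⁻¹)
    (hRtPSD : Rt.PosSemidef)
    (Ft : Matrix (Fin NR) (Fin M) ℂ) (hFt : Ft = (hRtPSD.1.eigenvectorUnitary : Matrix (Fin NR) (Fin NR) ℂ) *
      Matrix.diagonal ((↑) ∘ (√·) ∘ hRtPSD.1.eigenvalues) *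
      (star hRtPSD.1.eigenvectorUnitary : Matrix (Fin NR) (Fin NR) ℂ) * F)
    (Zt : Matrix (Fin NT) (Fin NR) ℂ) (hZt : Zt = σ2⁻¹ • Htᴴ - Hbᴴ * Rt)
    (J : Matrix (Fin M) (Fin M) ℂ → ℝ)
    (hJ : ∀ Θ, J Θ = 2 * (Matrix.trace (Zt * F * Θ * Gbᴴ)).re
        - (Matrix.trace ((Ft * Θ * Gbᴴ)ᴴ * (Ft * Θ * Gbᴴ))).re) :
    (∀ Θ : Matrix (Fin M) (Fin M) ℂ, C Θ ≥ C Θt + (J Θ - J Θt)) ∧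
    ∀ Θnext : Matrix (Fin M) (Fin M) ℂ, J Θnext ≥ J Θt → C Θnext ≥ C Θt := by
  have hRt' : Rt = ((σ2:ℂ))⁻¹ • (1 : Matrix (Fin NR) (Fin NR) ℂ)
      - ((σ2:ℂ) • (1 : Matrix (Fin NR) (Fin NR) ℂ) + Ht * Htᴴ)⁻¹ := by
    rw [hRt, real_smul_mat, real_smul_mat, Complex.ofReal_inv]
  have hCs : ∀ Θ, C Θ = Real.log ((1 + ((σ2:ℂ))⁻¹ • (Heq Θ * (Heq Θ)ᴴ)).det.re) := by
    intro Θ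
    rw [hC, real_smul_mat, Complex.ofReal_inv]
  have hRth : Rtᴴ = Rt := hRtPSD.isHermitian.eq
  -- J in terms of ψ
  have hJψ : ∀ Θ, J Θ = (2 * σ2⁻¹ * (Matrix.trace (Htᴴ * Heq Θ)).re
        - (Matrix.trace ((Heq Θ)ᴴ * Rt * Heq Θ)).re)
      - (2 * σ2⁻¹ * (Matrix.trace (Htᴴ * Hb)).re - (Matrix.trace (Hbᴴ * Rt * Hb)).re) := by
    intro Θ
    have hD : Ft * Θ * Gbᴴ = psdSqrt hRtPSD * (F * Θ * Gbᴴ) := by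
      rw [hFt]; simp [psdSqrt, Matrix.mul_assoc]
    have hquad : (Ft * Θ * Gbᴴ)ᴴ * (Ft * Θ * Gbᴴ)
        = (F * Θ * Gbᴴ)ᴴ * Rt * (F * Θ * Gbᴴ) := by
      rw [hD, conjTranspose_mul, Matrix.mul_assoc, ← Matrix.mul_assoc (psdSqrt hRtPSD)ᴴ,
        psdSqrt_herm hRtPSD, psdSqrt_mul_self hRtPSD, ← Matrix.mul_assoc]
    have hlin : Zt * F * Θ * Gbᴴ = ((σ2:ℂ))⁻¹ • (Htᴴ * (F * Θ * Gbᴴ))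
        - Hbᴴ * Rt * (F * Θ * Gbᴴ) := by
      rw [hZt, real_smul_mat, Complex.ofReal_inv]
      simp [Matrix.sub_mul, Matrix.smul_mul, Matrix.mul_assoc]
    rw [hJ, hquad, hlin, hHeq]
    -- expand everything
    set Δ := F * Θ * Gbᴴ with hΔ
    have e1 : Matrix.trace (Htᴴ * (Hb + Δ)) = Matrix.trace (Htᴴ * Hb) + Matrix.trace (Htᴴ * Δ) := by
      rw [Matrix.mul_add, trace_add]
    have e2 : Matrix.trace ((Hb + Δ)ᴴ * Rt * (Hb + Δ))
        = Matrix.trace (Hbᴴ * Rt * Hb) + Matrix.trace (Hbᴴ * Rt * Δ)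
          + Matrix.trace (Δᴴ * Rt * Hb) + Matrix.trace (Δᴴ * Rt * Δ) := by
      rw [conjTranspose_add, Matrix.add_mul, Matrix.add_mul, Matrix.mul_add, Matrix.mul_add,
        trace_add, trace_add, trace_add]
      ring
    have e3 : (Matrix.trace (Δᴴ * Rt * Hb)).re = (Matrix.trace (Hbᴴ * Rt * Δ)).re := by
      have h' : (Hbᴴ * Rt * Δ)ᴴ = Δᴴ * Rt * Hb := by
        rw [conjTranspose_mul (Hbᴴ * Rt) Δ, conjTranspose_mul Hbᴴ Rt, hRth,
          conjTranspose_conjTranspose, ← Matrix.mul_assoc]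
      rw [← h', Matrix.trace_conjTranspose]
      exact Complex.conj_re _
    have e4 : (Matrix.trace (((σ2:ℂ))⁻¹ • (Htᴴ * Δ) - Hbᴴ * Rt * Δ)).re
        = σ2⁻¹ * (Matrix.trace (Htᴴ * Δ)).re - (Matrix.trace (Hbᴴ * Rt * Δ)).re := by
      rw [trace_sub, Matrix.trace_smul, Complex.sub_re, smul_eq_mul, ← Complex.ofReal_inv,
        Complex.re_ofReal_mul]
    rw [e4, e1, e2]
    simp only [Complex.add_re]
    rw [e3]
    ring
  have main : ∀ Θ : Matrix (Fin M) (Fin M) ℂ, C Θ ≥ C Θt + (J Θ - J Θt) := by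
    intro Θ
    have hk := key σ2 hσ (Heq Θ) Ht Rt hRt'
    rw [hCs, hCs, ← hHt]
    have hJd : J Θ - J Θt = (2 * σ2⁻¹ * (Matrix.trace (Htᴴ * Heq Θ)).re
          - (Matrix.trace ((Heq Θ)ᴴ * Rt * Heq Θ)).re)
        - (2 * σ2⁻¹ * (Matrix.trace (Htᴴ * Ht)).re - (Matrix.trace (Htᴴ * Rt * Ht)).re) := by
      rw [hJψ, hJψ, ← hHt]
      ring
    rw [hJd]
    linarith [hk]
  exact ⟨main, fun Θn hΘn => by linarith [main Θn]⟩
end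

section
/- (Eigenbeamforming structure of the optimal transmit covariance) Let H ∈ ℂ^{N_R×N_T}, σ² > 0 and P > 0, and let V ∈ ℂ^{N_T×N_T} be a unitary matrix diagonalizing HᴴH, i.e., HᴴH = V Λ Vᴴ with Λ diagonal. Then the maximum of log det(I_{N_R} + (1/σ²)·H X Hᴴ) over the set {X ∈ ℂ^{N_T×N_T} : X Hermitian positive semidefinite, tr(X) ≤ P} is attained at some X* of the form X* = V D Vᴴ, where D is a real diagonal matrix with nonnegative entries summing to at most P. -/
open Matrix
open scoped ComplexOrder

namespace EigenAux


variable {n : ℕ}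

lemma smul_posSemidef {M : Matrix (Fin n) (Fin n) ℂ} (hM : M.PosSemidef) {c : ℝ} (hc : 0 ≤ c) :
    (c • M).PosSemidef := by
  refine ⟨?_, fun x => ?_⟩
  · show (c • M)ᴴ = c • M
    rw [conjTranspose_smul, star_trivial, hM.isHermitian.eq]
  · exact (hM.smul hc).2 x

lemma diag_re_nonneg {M : Matrix (Fin n) (Fin n) ℂ} (hM : M.PosSemidef) (i : Fin n) :
    0 ≤ (M i i).re := by
  have h := hM.dotProduct_mulVec_nonneg (Pi.single i 1)
  have h2 : star (Pi.single i 1 : Fin n → ℂ) ⬝ᵥ (M *ᵥ Pi.single i 1) = M i i := by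
    simp [mulVec_single, dotProduct, Pi.single_apply, apply_ite]
  rw [h2] at h
  exact (Complex.le_def.mp h).1

lemma trace_eq_sum_eigenvalues {A : Matrix (Fin n) (Fin n) ℂ} (hA : A.IsHermitian) :
    A.trace = ∑ i, (hA.eigenvalues i : ℂ) := by
  conv_lhs => rw [hA.spectral_theorem]
  rw [Unitary.conjStarAlgAut_apply]
  rw [trace_mul_cycle]
  rw [show (star (hA.eigenvectorUnitary : Matrix (Fin n) (Fin n) ℂ)) *
      (hA.eigenvectorUnitary : Matrix (Fin n) (Fin n) ℂ) = 1 from Unitary.coe_star_mul_self _]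
  rw [Matrix.one_mul, trace_diagonal]
  simp

lemma hadamard {M : Matrix (Fin n) (Fin n) ℂ} (hM : M.PosSemidef) :
    M.det.re ≤ ∏ i, (M i i).re := by
  rcases Nat.eq_zero_or_pos n with hn | hn
  · subst hn
    simp [Matrix.det_fin_zero]
  set a : Fin n → ℝ := fun i => (M i i).re with ha
  have ha0 : ∀ i, 0 ≤ a i := diag_re_nonneg hM
  have hdr : ∀ i, M i i = (a i : ℂ) := fun i => (hM.isHermitian.coe_re_apply_self i).symm
  by_cases hpos : ∀ i, 0 < a i
  · -- normalization case
    set D : Matrix (Fin n) (Fin n) ℂ := diagonal (fun i => ((Real.sqrt (a i))⁻¹ : ℂ)) with hD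
    set N : Matrix (Fin n) (Fin n) ℂ := D * M * D with hNdef
    have hDh : Dᴴ = D := by
      rw [hD, diagonal_conjTranspose]
      congr 1
      funext i
      simp [Pi.star_def, Complex.star_def, map_inv₀, Complex.conj_ofReal]
    have hN : N.PosSemidef := by
      have := hM.mul_mul_conjTranspose_same D
      rwa [hDh] at this
    have hsne : ∀ i, Real.sqrt (a i) ≠ 0 := fun i => (Real.sqrt_pos.mpr (hpos i)).ne'
    have hNdiag : ∀ i, N i i = 1 := by
      intro i
      have hreal : (Real.sqrt (a i))⁻¹ * (a i) * (Real.sqrt (a i))⁻¹ = 1 := by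
        have hx : Real.sqrt (a i) * Real.sqrt (a i) = a i := Real.mul_self_sqrt (ha0 i)
        nth_rewrite 2 [← hx]
        field_simp
        exact div_self (hsne i)
      have hcast := congrArg (fun x : ℝ => (x : ℂ)) hreal
      push_cast at hcast
      rw [hNdef, hD, Matrix.mul_diagonal, Matrix.diagonal_mul, hdr i]
      exact hcast
    have htr : N.trace = (n : ℂ) := by
      rw [Matrix.trace]
      simp only [Matrix.diag]
      rw [Finset.sum_congr rfl (fun i _ => hNdiag i)]
      simp
    set μ : Fin n → ℝ := hN.1.eigenvalues with hμ
    have hμ0 : ∀ i, 0 ≤ μ i := hN.eigenvalues_nonneg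
    have hμsum : ∑ i, μ i = n := by
      have h1 := trace_eq_sum_eigenvalues hN.1
      rw [htr] at h1
      have := congrArg Complex.re h1.symm
      simpa using this
    have hμprod : ∏ i, μ i ≤ 1 := by
      have hw : ∑ _i : Fin n, (n : ℝ)⁻¹ = 1 := by
        simp [Finset.sum_const]
        field_simp
      have hgm := Real.geom_mean_le_arith_mean_weighted Finset.univ
        (fun _ => (n : ℝ)⁻¹) μ (fun i _ => by positivity) hw (fun i _ => hμ0 i)
      have harith : ∑ i, (n : ℝ)⁻¹ * μ i ≤ 1 := by
        rw [← Finset.mul_sum, hμsum]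
        field_simp
        exact le_rfl
      have h1 : ∏ i, μ i ^ ((n : ℝ)⁻¹) ≤ 1 := le_trans hgm harith
      have h2 : ∏ i, μ i = (∏ i, μ i ^ ((n : ℝ)⁻¹)) ^ (n : ℕ) := by
        rw [← Finset.prod_pow]
        refine Finset.prod_congr rfl fun i _ => ?_
        rw [← Real.rpow_natCast (μ i ^ ((n:ℝ)⁻¹)) n, ← Real.rpow_mul (hμ0 i)]
        rw [inv_mul_cancel₀ (by exact_mod_cast hn.ne')]
        exact (Real.rpow_one _).symm
      rw [h2]
      exact pow_le_one₀ (Finset.prod_nonneg fun i _ => Real.rpow_nonneg (hμ0 i) _) h1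
    have hdetN : N.det.re = ∏ i, μ i := by
      rw [hN.1.det_eq_prod_eigenvalues]
      norm_cast
    -- reconstruct M
    set E : Matrix (Fin n) (Fin n) ℂ := diagonal (fun i => ((Real.sqrt (a i)) : ℂ)) with hE
    have hED : E * D = 1 := by
      have h : (fun i => ((Real.sqrt (a i) : ℂ)) * ((Real.sqrt (a i) : ℂ))⁻¹) = fun _ => (1 : ℂ) :=
        funext fun i => mul_inv_cancel₀ (Complex.ofReal_ne_zero.mpr (hsne i))
      rw [hE, hD, diagonal_mul_diagonal, h, diagonal_one]
    have hDE : D * E = 1 := by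
      have h : (fun i => ((Real.sqrt (a i) : ℂ))⁻¹ * ((Real.sqrt (a i) : ℂ))) = fun _ => (1 : ℂ) :=
        funext fun i => inv_mul_cancel₀ (Complex.ofReal_ne_zero.mpr (hsne i))
      rw [hE, hD, diagonal_mul_diagonal, h, diagonal_one]
    have hME : M = E * N * E := by
      rw [hNdef]
      calc M = (E * D) * M * (D * E) := by rw [hED, hDE, Matrix.one_mul, Matrix.mul_one]
      _ = E * (D * M * D) * E := by simp only [Matrix.mul_assoc]
    have hdetM : M.det = ((∏ i, a i : ℝ) : ℂ) * N.det := by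
      rw [hME, Matrix.det_mul, Matrix.det_mul]
      rw [show E.det * N.det * E.det = (E.det * E.det) * N.det by ring]
      congr 1
      rw [hE, det_diagonal, ← Finset.prod_mul_distrib]
      push_cast
      refine Finset.prod_congr rfl fun i _ => ?_
      rw [← Complex.ofReal_mul, Real.mul_self_sqrt (ha0 i)]
    calc M.det.re = (∏ i, a i) * N.det.re := by rw [hdetM, Complex.re_ofReal_mul]
    _ ≤ (∏ i, a i) * 1 := by
        rw [hdetN]
        exact mul_le_mul_of_nonneg_left hμprod (Finset.prod_nonneg fun i _ => ha0 i)
    _ = ∏ i, a i := mul_one _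
  · -- some diagonal entry is zero
    push_neg at hpos
    obtain ⟨i, hi⟩ := hpos
    have hai : a i = 0 := le_antisymm hi (ha0 i)
    have hMii : M i i = 0 := by rw [hdr i, hai]; simp
    -- column i of M is zero
    set R := (open scoped MatrixOrder in CFC.sqrt M) with hR
    have hRps : R.PosSemidef := open scoped MatrixOrder in (CFC.sqrt_nonneg M).posSemidef
    have hRM : R * R = M := open scoped MatrixOrder in CFC.sqrt_mul_sqrt_self M hM.nonneg
    have hcol : ∀ k, R k i = 0 := by
      have h1 : (∑ k, Complex.normSq (R k i) : ℂ) = 0 := by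
        have : M i i = ∑ k, R i k * R k i := by rw [← hRM, Matrix.mul_apply]
        rw [hMii] at this
        rw [show (∑ k, Complex.normSq (R k i) : ℂ) = ∑ k, R i k * R k i from ?_]
        · exact this.symm
        push_cast
        refine Finset.sum_congr rfl fun k _ => ?_
        rw [← hRps.isHermitian.apply i k, Complex.star_def]
        exact Complex.normSq_eq_conj_mul_self
      have h2 : (∑ k, Complex.normSq (R k i)) = 0 := by exact_mod_cast h1
      intro k
      have := (Finset.sum_eq_zero_iff_of_nonneg
        (fun j _ => Complex.normSq_nonneg (R j i))).mp h2 k (Finset.mem_univ k)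
      exact Complex.normSq_eq_zero.mp this
    have hMcol : ∀ j, M j i = 0 := by
      intro j
      rw [← hRM, Matrix.mul_apply]
      exact Finset.sum_eq_zero fun k _ => by rw [hcol k, mul_zero]
    have : M.det = 0 := Matrix.det_eq_zero_of_column_eq_zero i hMcol
    rw [this]
    simpa using Finset.prod_nonneg fun j _ => ha0 j


end EigenAux

/-- Eigenbeamforming structure of the optimal transmit covariance:
if `HᴴH = V Λ Vᴴ` with `V` unitary and `Λ` diagonal, then the capacity
`log det(I + (1/σ²) H X Hᴴ)` is maximized over `{X ⪰ 0, tr X ≤ P}` at some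
`X* = V D Vᴴ` with `D` real diagonal, nonnegative, with entries summing to at most `P`. -/
theorem optimal_covariance_eigenbeamforming {NR NT : ℕ}
    (H : Matrix (Fin NR) (Fin NT) ℂ) (σ2 P : ℝ) (hσ : 0 < σ2) (hP : 0 < P)
    (V Λ : Matrix (Fin NT) (Fin NT) ℂ) (hV : Vᴴ * V = 1) (hΛ : Λ.IsDiag)
    (hdiag : Hᴴ * H = V * Λ * Vᴴ) :
    ∃ d : Fin NT → ℝ, (∀ i, 0 ≤ d i) ∧ (∑ i, d i) ≤ P ∧
      (V * Matrix.diagonal (fun i => (d i : ℂ)) * Vᴴ).PosSemidef ∧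
      ((V * Matrix.diagonal (fun i => (d i : ℂ)) * Vᴴ).trace).re ≤ P ∧
      ∀ X : Matrix (Fin NT) (Fin NT) ℂ, X.PosSemidef → (X.trace).re ≤ P →
        Real.log ((1 + σ2⁻¹ • (H * X * Hᴴ)).det.re) ≤
        Real.log ((1 + σ2⁻¹ •
          (H * (V * Matrix.diagonal (fun i => (d i : ℂ)) * Vᴴ) * Hᴴ)).det.re) := by
  have hc0 : 0 ≤ σ2⁻¹ := inv_nonneg.mpr hσ.le
  have hVV : V * Vᴴ = 1 := mul_eq_one_comm.mp hV
  -- Λ is PSD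
  have hΛps : Λ.PosSemidef := by
    have h1 : (Hᴴ * H).PosSemidef := posSemidef_conjTranspose_mul_self H
    have h2 : Λ = Vᴴ * (Hᴴ * H) * Vᴴᴴ := by
      rw [hdiag, conjTranspose_conjTranspose]
      calc Λ = (Vᴴ * V) * Λ * (Vᴴ * V) := by rw [hV, Matrix.one_mul, Matrix.mul_one]
      _ = Vᴴ * (V * Λ * Vᴴ) * V := by simp only [Matrix.mul_assoc]
    rw [h2]
    exact h1.mul_mul_conjTranspose_same Vᴴ
  set lam : Fin NT → ℝ := fun i => (Λ i i).re with hlam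
  have hlam0 : ∀ i, 0 ≤ lam i := fun i => EigenAux.diag_re_nonneg hΛps i
  have hΛeq : Λ = Matrix.diagonal (fun i => (lam i : ℂ)) := by
    ext i j
    by_cases h : i = j
    · subst h
      rw [Matrix.diagonal_apply_eq]
      exact (hΛps.isHermitian.coe_re_apply_self i).symm
    · rw [hΛ h, Matrix.diagonal_apply_ne _ h]
  -- key determinant identity
  have key : ∀ Y : Matrix (Fin NT) (Fin NT) ℂ,
      (1 + σ2⁻¹ • (H * (V * Y * Vᴴ) * Hᴴ)).det = (1 + σ2⁻¹ • (Y * Λ)).det := by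
    intro Y
    have hG : (H * V)ᴴ * (H * V) = Λ := by
      rw [conjTranspose_mul]
      calc Vᴴ * Hᴴ * (H * V) = Vᴴ * (Hᴴ * H) * V := by simp only [Matrix.mul_assoc]
      _ = (Vᴴ * V) * Λ * (Vᴴ * V) := by rw [hdiag]; simp only [Matrix.mul_assoc]
      _ = Λ := by rw [hV, Matrix.one_mul, Matrix.mul_one]
    have h1 : H * (V * Y * Vᴴ) * Hᴴ = (H * V) * (Y * (H * V)ᴴ) := by
      rw [conjTranspose_mul]
      simp only [Matrix.mul_assoc]
    rw [h1, ← Matrix.mul_smul, Matrix.det_one_add_mul_comm, Matrix.smul_mul,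
      Matrix.mul_assoc, hG]
  -- diagonal value
  have diagval : ∀ e : Fin NT → ℝ,
      (1 + σ2⁻¹ • (Matrix.diagonal (fun i => (e i : ℂ)) * Λ)).det.re
        = ∏ i, (1 + σ2⁻¹ * lam i * e i) := by
    intro e
    rw [hΛeq, diagonal_mul_diagonal]
    rw [show (1 : Matrix (Fin NT) (Fin NT) ℂ) +
        σ2⁻¹ • Matrix.diagonal (fun i => (e i : ℂ) * (lam i : ℂ)) =
        Matrix.diagonal (fun i => ((1 + σ2⁻¹ * lam i * e i : ℝ) : ℂ)) from ?_]
    · rw [Matrix.det_diagonal, ← Complex.ofReal_prod, Complex.ofReal_re]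
    · ext i j
      rcases eq_or_ne i j with h | h
      · subst h
        simp only [Matrix.add_apply, Matrix.one_apply_eq, Matrix.smul_apply,
          Matrix.diagonal_apply_eq, Complex.real_smul]
        push_cast
        ring
      · simp [Matrix.add_apply, Matrix.one_apply_ne h, Matrix.smul_apply,
          Matrix.diagonal_apply_ne _ h]
  -- Hadamard bound
  have bound : ∀ Y : Matrix (Fin NT) (Fin NT) ℂ, Y.PosSemidef →
      (1 + σ2⁻¹ • (Y * Λ)).det.re ≤ ∏ i, (1 + σ2⁻¹ * lam i * (Y i i).re) := by
    intro Y hY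
    set S : Matrix (Fin NT) (Fin NT) ℂ :=
      Matrix.diagonal (fun i => ((Real.sqrt (lam i)) : ℂ)) with hS
    have hSh : Sᴴ = S := by
      rw [hS, diagonal_conjTranspose]
      congr 1
      simp [Pi.star_def, Complex.star_def, Complex.conj_ofReal]
    have hSS : S * S = Λ := by
      have h : (fun i => ((Real.sqrt (lam i) : ℂ)) * ((Real.sqrt (lam i)) : ℂ))
          = fun i => ((lam i : ℝ) : ℂ) :=
        funext fun i => by rw [← Complex.ofReal_mul, Real.mul_self_sqrt (hlam0 i)]
      rw [hS, diagonal_mul_diagonal, h, hΛeq]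
    have hstep : (1 + σ2⁻¹ • (Y * Λ)).det = (1 + σ2⁻¹ • (S * Y * S)).det := by
      rw [← hSS, ← Matrix.mul_assoc]
      rw [show σ2⁻¹ • (Y * S * S) = (σ2⁻¹ • (Y * S)) * S from (Matrix.smul_mul _ _ _).symm]
      rw [Matrix.det_one_add_mul_comm]
      congr 2
      rw [mul_smul_comm, ← Matrix.mul_assoc]
    have hSYS : (S * Y * S).PosSemidef := by
      have := hY.mul_mul_conjTranspose_same S
      rwa [hSh] at this
    have hMps : (1 + σ2⁻¹ • (S * Y * S)).PosSemidef :=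
      Matrix.PosSemidef.add Matrix.PosSemidef.one (EigenAux.smul_posSemidef hSYS hc0)
    have hHad := EigenAux.hadamard hMps
    rw [hstep]
    refine le_trans hHad (le_of_eq ?_)
    refine Finset.prod_congr rfl fun i _ => ?_
    rw [Matrix.add_apply, Matrix.one_apply_eq, Matrix.smul_apply]
    rw [Matrix.mul_diagonal, Matrix.diagonal_mul]
    rw [show ((Real.sqrt (lam i) : ℂ)) * Y i i * ((Real.sqrt (lam i)) : ℂ)
        = ((Real.sqrt (lam i) * Real.sqrt (lam i) : ℝ) : ℂ) * Y i i by push_cast; ring]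
    rw [Real.mul_self_sqrt (hlam0 i)]
    rw [show σ2⁻¹ • (((lam i : ℝ) : ℂ) * Y i i)
        = ((σ2⁻¹ * lam i : ℝ) : ℂ) * Y i i by rw [Complex.real_smul]; push_cast; ring]
    rw [Complex.add_re, Complex.one_re, Complex.re_ofReal_mul]
  -- reduction of any feasible X
  have reduce : ∀ X : Matrix (Fin NT) (Fin NT) ℂ, X.PosSemidef → (X.trace).re ≤ P →
      ∃ e : Fin NT → ℝ, (∀ i, 0 ≤ e i) ∧ (∑ i, e i) ≤ P ∧
        (1 + σ2⁻¹ • (H * X * Hᴴ)).det.re ≤ ∏ i, (1 + σ2⁻¹ * lam i * e i) := by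
    intro X hX hXtr
    set Y : Matrix (Fin NT) (Fin NT) ℂ := Vᴴ * X * V with hYdef
    have hY : Y.PosSemidef := by
      have := hX.mul_mul_conjTranspose_same Vᴴ
      rwa [conjTranspose_conjTranspose] at this
    have hXY : X = V * Y * Vᴴ := by
      rw [hYdef]
      calc X = (V * Vᴴ) * X * (V * Vᴴ) := by rw [hVV, Matrix.one_mul, Matrix.mul_one]
      _ = V * (Vᴴ * X * V) * Vᴴ := by simp only [Matrix.mul_assoc]
    refine ⟨fun i => (Y i i).re, fun i => EigenAux.diag_re_nonneg hY i, ?_, ?_⟩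
    · have htr : Y.trace = X.trace := by
        rw [hYdef, Matrix.trace_mul_cycle, hVV, Matrix.one_mul]
      have : (∑ i, (Y i i).re) = Y.trace.re := by
        rw [Matrix.trace]
        exact (Complex.re_sum Finset.univ _).symm
      rw [this, htr]
      exact hXtr
    · rw [hXY, key Y]
      exact bound Y hY
  -- compactness / maximization
  set φ : (Fin NT → ℝ) → ℝ := fun e => ∏ i, (1 + σ2⁻¹ * lam i * e i) with hφ
  set Sfeas : Set (Fin NT → ℝ) := {e | (∀ i, 0 ≤ e i) ∧ ∑ i, e i ≤ P} with hSfeas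
  have hsub : Sfeas ⊆ Set.Icc 0 (fun _ => P) := by
    rintro e ⟨h1, h2⟩
    constructor
    · intro i; exact h1 i
    · intro i
      calc e i ≤ ∑ j, e j := Finset.single_le_sum (fun j _ => h1 j) (Finset.mem_univ i)
      _ ≤ P := h2
  have hclosed : IsClosed Sfeas := by
    have h1 : Sfeas = (⋂ i, {e : Fin NT → ℝ | 0 ≤ e i}) ∩ {e | ∑ i, e i ≤ P} := by
      ext e
      simp [hSfeas, Set.mem_iInter]
    rw [h1]
    refine IsClosed.inter (isClosed_iInter fun i => ?_) ?_
    · exact isClosed_le continuous_const (continuous_apply i)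
    · exact isClosed_le (continuous_finset_sum _ fun i _ => continuous_apply i) continuous_const
  have hcpt : IsCompact Sfeas := (isCompact_Icc).of_isClosed_subset hclosed hsub
  have hne : Sfeas.Nonempty := ⟨0, fun i => le_refl 0, by simp [hP.le]⟩
  have hφc : Continuous φ := by
    apply continuous_finset_prod
    intro i _
    exact continuous_const.add (continuous_const.mul (continuous_apply i))
  obtain ⟨d, hdS, hdmax⟩ := hcpt.exists_isMaxOn hne hφc.continuousOn
  -- candidate value
  have candval : (1 + σ2⁻¹ •
      (H * (V * Matrix.diagonal (fun i => (d i : ℂ)) * Vᴴ) * Hᴴ)).det.re = φ d := by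
    rw [key (Matrix.diagonal (fun i => (d i : ℂ)))]
    exact diagval d
  refine ⟨d, hdS.1, hdS.2, ?_, ?_, ?_⟩
  · refine Matrix.PosSemidef.mul_mul_conjTranspose_same ?_ V
    exact Matrix.posSemidef_diagonal_iff.mpr fun i => Complex.zero_le_real.mpr (hdS.1 i)
  · rw [Matrix.trace_mul_cycle, hV, Matrix.one_mul, Matrix.trace_diagonal]
    rw [← Complex.ofReal_sum, Complex.ofReal_re]
    exact hdS.2
  · intro X hX hXtr
    obtain ⟨e, he0, heP, hebound⟩ := reduce X hX hXtr
    have heS : e ∈ Sfeas := ⟨he0, heP⟩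
    have hmono : (1 + σ2⁻¹ • (H * X * Hᴴ)).det.re ≤ (1 + σ2⁻¹ •
        (H * (V * Matrix.diagonal (fun i => (d i : ℂ)) * Vᴴ) * Hᴴ)).det.re := by
      rw [candval]
      exact le_trans hebound (hdmax heS)
    have hpos : 0 < (1 + σ2⁻¹ • (H * X * Hᴴ)).det.re := by
      have hPSD : (σ2⁻¹ • (H * X * Hᴴ)).PosSemidef :=
        EigenAux.smul_posSemidef (hX.mul_mul_conjTranspose_same H) hc0
      have hPD : (1 + σ2⁻¹ • (H * X * Hᴴ)).PosDef :=
        Matrix.PosDef.add_posSemidef Matrix.PosDef.one hPSD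
      have := hPD.det_pos
      exact (Complex.lt_def.mp this).1
    exact Real.log_le_log hpos hmono
end
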